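/- Let G be a finite directed acyclic multigraph with a distinguished source vertex s, and suppose every vertex v ≠ s satisfies d(v) ≥ d, where d(v) = |Γ⁻(v) \ {s}| + |[s,v]| (the number of non-source parents of v plus the number of parallel edges from s to v). Then for every vertex t ≠ s that is not adjacent to s, the maximum number of pairwise internally-disjoint directed paths from s to t is at least d. -/

import Mathlib

/-- A directed multigraph on vertex type `V` with edge type `E`. -/
structure Multigraph (V E : Type) where
  tail : E → V
  head : E → V

namespace Multigraph

variable {V E : Type}

/-- A (directed) walk from `s` to `t`: a nonempty list of edges, consecutive
edges compatible, starting at `s` and ending at `t`. -/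
structure Walk (G : Multigraph V E) (s t : V) where
  edges : List E
  ne : edges ≠ []
  first : G.tail (edges.head ne) = s
  last : G.head (edges.getLast ne) = t
  chain : edges.Chain' fun e f => G.head e = G.tail f

namespace Walk

variable {G : Multigraph V E} {s t : V}

/-- The internal vertices of a walk: heads of all edges except the last. -/
def internals (w : G.Walk s t) : Set V :=
  {v | ∃ e ∈ w.edges.dropLast, G.head e = v}

/-- All vertices visited by a walk. -/
def vertexSet (w : G.Walk s t) : Set V :=
  {v | v = s ∨ ∃ e ∈ w.edges, G.head e = v}

/-- The set of edges used by a walk. -/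
def edgeSet (w : G.Walk s t) : Set E := {e | e ∈ w.edges}

/-- A walk is simple (a path) if it visits no vertex twice. -/
def IsSimple (w : G.Walk s t) : Prop := (s :: w.edges.map G.head).Nodup

end Walk

/-- There exist `n` pairwise internally-disjoint paths from `s` to `t`
(in a multigraph, parallel direct edges count as distinct internally-disjoint
paths, so pairwise edge-disjointness is also required). -/
def HasIntDisjoint (G : Multigraph V E) (s t : V) (n : ℕ) : Prop :=
  ∃ P : Fin n → G.Walk s t, ∀ i j, i ≠ j →
    (P i).internals ∩ (P j).internals = ∅ ∧ (P i).edgeSet ∩ (P j).edgeSet = ∅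

/-- There exist `n` pairwise edge-disjoint walks from `s` to `t`. -/
def HasEdgeDisjoint (G : Multigraph V E) (s t : V) (n : ℕ) : Prop :=
  ∃ P : Fin n → G.Walk s t, ∀ i j, i ≠ j →
    (P i).edgeSet ∩ (P j).edgeSet = ∅

/-- `A ⊆ V \ {s,t}` is an `s,t`-vertex cut: removing `A` destroys all
walks from `s` to `t`, i.e. every walk from `s` to `t` meets `A`. -/
def IsVertexCut (G : Multigraph V E) (s t : V) (A : Set V) : Prop :=
  s ∉ A ∧ t ∉ A ∧ ∀ w : G.Walk s t, ∃ v ∈ w.vertexSet, v ∈ A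

/-- There is no edge from `s` to `t`. -/
def Nonadjacent (G : Multigraph V E) (s t : V) : Prop :=
  ∀ e : E, ¬(G.tail e = s ∧ G.head e = t)

/-- The edge cut `[S, S̄]`: all edges with tail in `S` and head outside `S`. -/
def cutE (G : Multigraph V E) [Fintype E] [DecidableEq V] (S : Finset V) : Finset E :=
  Finset.univ.filter fun e => G.tail e ∈ S ∧ G.head e ∉ S

/-- `tail([S, S̄])`: the set of tails of the edges in the cut `[S, S̄]`. -/
def tailSet (G : Multigraph V E) [Fintype E] [DecidableEq V] (S : Finset V) : Finset V :=
  (G.cutE S).image G.tail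

/-- The parents of a vertex `v`. -/
def parents (G : Multigraph V E) (v : V) : Set V :=
  {u | ∃ e : E, G.tail e = u ∧ G.head e = v}

/-- The in-degree of a vertex: number of edges entering it. -/
def indeg (G : Multigraph V E) [Fintype E] [DecidableEq V] (t : V) : ℕ :=
  (Finset.univ.filter fun e => G.head e = t).card

/-- The diversity `d(v) = |Γ⁻(v) \ {s}| + |[s,v]|` of a vertex `v`
with respect to the source `s`. -/
def diversity (G : Multigraph V E) [Fintype V] [Fintype E] [DecidableEq V]
    (s v : V) : ℕ :=
  (Finset.univ.filter fun u => u ≠ s ∧ ∃ e : E, G.tail e = u ∧ G.head e = v).card +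
  (Finset.univ.filter fun e : E => G.tail e = s ∧ G.head e = v).card

/-- A multigraph is acyclic if it has no closed walk. -/
def Acyclic (G : Multigraph V E) : Prop := ∀ v : V, IsEmpty (G.Walk v v)

/-- The broadcast transformation with source `s`: every vertex `u ≠ s` is
split into `u → u⁺`, all edges into `u` are kept, and every edge out of
`u` is redirected to originate from `u⁺` (edges out of `s` are unchanged). -/
def broadcast (G : Multigraph V E) (s : V) [DecidableEq V] :
    Multigraph (V ⊕ {u : V // u ≠ s}) (E ⊕ {u : V // u ≠ s}) where
  tail := fun x => match x with
    | Sum.inl e => if h : G.tail e = s then Sum.inl s else Sum.inr ⟨G.tail e, h⟩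
    | Sum.inr u => Sum.inl u.1
  head := fun x => match x with
    | Sum.inl e => Sum.inl (G.head e)
    | Sum.inr u => Sum.inr u

/-- `hw` is the walk in the broadcast transformation corresponding to `w`:
the original edges appearing along `hw`, in order, are exactly those of `w`. -/
def Corresponds [DecidableEq V] {G : Multigraph V E} {s t : V} (w : G.Walk s t)
    (hw : (G.broadcast s).Walk (Sum.inl s) (Sum.inl t)) : Prop :=
  hw.edges.filterMap (Sum.elim some (fun _ => none)) = w.edges

/-- `v` is reachable from `s` by a walk avoiding the vertex set `A`
(in the graph `G − A`). -/
def ReachAvoid (G : Multigraph V E) (A : Set V) (s v : V) : Prop :=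
  v = s ∨ ∃ w : G.Walk s v, ∀ x ∈ w.vertexSet, x ∉ A

end Multigraph


/-! ### Auxiliary development for `stmt3` -/

namespace Multigraph

variable {V E : Type}

section WalkHelpers

variable {G : Multigraph V E}

/-- single-edge walk -/
def Walk.single (e : E) {a b : V} (h1 : G.tail e = a) (h2 : G.head e = b) :
    G.Walk a b :=
  ⟨[e], by simp, by simpa using h1, by simpa using h2, List.isChain_singleton e⟩

/-- extend a walk by one edge at the end -/
def Walk.snoc {a b : V} (w : G.Walk a b) (e : E) (h : G.tail e = b) :
    G.Walk a (G.head e) where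
  edges := w.edges ++ [e]
  ne := by simp
  first := by
    rw [List.head_append_of_ne_nil w.ne]
    exact w.first
  last := by simp [List.getLast_append]
  chain := by
    unfold List.Chain'
    rw [List.isChain_append]
    refine ⟨w.chain, List.isChain_singleton e, ?_⟩
    intro x hx y hy
    simp only [List.head?_cons, Option.mem_def, Option.some.injEq] at hy
    subst hy
    rw [List.getLast?_eq_getLast_of_ne_nil w.ne, Option.mem_def, Option.some.injEq] at hx
    subst hx
    rw [w.last, h]

/-- extend a walk by one edge at the front -/
def Walk.cons {b c : V} (e : E) (w : G.Walk b c) (h : G.head e = b) :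
    G.Walk (G.tail e) c where
  edges := e :: w.edges
  ne := by simp
  first := rfl
  last := by
    rw [List.getLast_cons w.ne]
    exact w.last
  chain := by
    unfold List.Chain'
    rw [List.isChain_cons]
    refine ⟨?_, w.chain⟩
    intro y hy
    rw [List.head?_eq_head w.ne, Option.mem_def, Option.some.injEq] at hy
    subst hy
    rw [h, w.first]

/-- parent relation -/
def rel (G : Multigraph V E) (u v : V) : Prop := ∃ e : E, G.tail e = u ∧ G.head e = v

lemma walk_of_transGen {u v : V} (h : Relation.TransGen G.rel u v) :
    Nonempty (G.Walk u v) := by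
  induction h using Relation.TransGen.head_induction_on with
  | single h => obtain ⟨e, h1, h2⟩ := h; exact ⟨Walk.single e h1 h2⟩
  | head h _ ih =>
      obtain ⟨e, h1, h2⟩ := h
      obtain ⟨w⟩ := ih
      exact ⟨h1 ▸ Walk.cons e w h2⟩

lemma wf_transGen [Finite V] (hacyc : G.Acyclic) :
    WellFounded (Relation.TransGen G.rel) := by
  have : IsIrrefl V (Relation.TransGen G.rel) := by
    constructor
    intro v h
    obtain ⟨w⟩ := walk_of_transGen h
    exact (hacyc v).false w
  have : IsTrans V (Relation.TransGen G.rel) := ⟨fun _ _ _ => Relation.TransGen.trans⟩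
  exact Finite.wellFounded_of_trans_of_irrefl _

/-- a walk can be cut off after any edge that is not the last one -/
lemma internal_walk {a b : V} (w : G.Walk a b) {e : E} (he : e ∈ w.edges.dropLast) :
    Nonempty (G.Walk a (G.head e)) := by
  obtain ⟨A, B, hAB⟩ := List.append_of_mem he
  have hedges : w.edges = (A ++ [e]) ++ (B ++ [w.edges.getLast w.ne]) := by
    conv_lhs => rw [← List.dropLast_append_getLast w.ne, hAB]
    simp
  have hch := w.chain
  rw [hedges] at hch
  have h1 : w.edges.head? =
      some (((A ++ [e]) ++ (B ++ [w.edges.getLast w.ne])).head (by simp)) := by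
    conv_lhs => rw [hedges]
    exact List.head?_eq_head _
  have h3 : ((A ++ [e]) ++ (B ++ [w.edges.getLast w.ne])).head (by simp) =
      (A ++ [e]).head (by simp) := List.head_append_of_ne_nil _
  have h4 : (A ++ [e]).head (by simp) = w.edges.head w.ne := by
    rw [← h3]
    exact (Option.some.inj ((List.head?_eq_head w.ne).symm.trans h1)).symm
  refine ⟨⟨A ++ [e], by simp, ?_, by simp [List.getLast_append],
    (List.isChain_append.1 hch).1⟩⟩
  rw [h4]
  exact w.first

end WalkHelpers

section Flow

variable [Fintype E] [DecidableEq E] [DecidableEq V] {G : Multigraph V E} {s t : V}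

/-- signed incidence -/
def dlt (G : Multigraph V E) (e : E) (x : V) : ℤ :=
  (if G.tail e = x then 1 else 0) - (if G.head e = x then 1 else 0)

/-- net outflow of `x` w.r.t. the edge set `F` -/
def bal (G : Multigraph V E) [Fintype E] (F : Finset E) (x : V) : ℤ := ∑ e ∈ F, G.dlt e x

/-- an `s,t`-flow (with unit capacities) -/
def Conserving (G : Multigraph V E) [Fintype E] (s t : V) (F : Finset E) : Prop :=
  ∀ x : V, x ≠ s → x ≠ t → G.bal F x = 0

/-- residual reachability from `s` with the (distinct) residual edges recorded -/
inductive Aug (G : Multigraph V E) (s : V) [Fintype E] (F : Finset E) : V → Finset E → Prop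
  | base : Aug G s F s ∅
  | fwd {v U e} : Aug G s F v U → e ∉ F → e ∉ U → G.tail e = v →
      Aug G s F (G.head e) (insert e U)
  | bwd {v U e} : Aug G s F v U → e ∈ F → e ∉ U → G.head e = v →
      Aug G s F (G.tail e) (insert e U)

lemma bal_insert {F : Finset E} {e : E} (h : e ∉ F) (x : V) :
    G.bal (insert e F) x = G.dlt e x + G.bal F x := by
  unfold bal
  rw [Finset.sum_insert h]

lemma bal_eq_card (F : Finset E) (x : V) :
    G.bal F x = ((F.filter fun e => G.tail e = x).card : ℤ) -
      ((F.filter fun e => G.head e = x).card : ℤ) := by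
  unfold bal dlt
  rw [Finset.sum_sub_distrib]
  congr 1 <;> rw [Finset.card_filter] <;> push_cast <;> rfl

lemma aug_abal {F : Finset E} {v : V} {U : Finset E} (h : Aug G s F v U) (x : V) :
    G.bal (U \ F) x - G.bal (U ∩ F) x =
      (if s = x then 1 else 0) - (if v = x then 1 else 0) := by
  induction h with
  | base => simp [bal]
  | @fwd v U e _ henF henU het ih =>
      have h1 : insert e U \ F = insert e (U \ F) := by
        rw [Finset.insert_sdiff_of_notMem _ henF]
      have h2 : insert e U ∩ F = U ∩ F := Finset.insert_inter_of_notMem henF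
      have h3 : e ∉ U \ F := fun hh => henU (Finset.mem_sdiff.1 hh).1
      rw [h1, h2, bal_insert h3]
      have hd : G.dlt e x = (if v = x then 1 else 0) - (if G.head e = x then 1 else 0) := by
        rw [dlt, het]
      rw [hd]
      linarith [ih]
  | @bwd v U e _ heF henU hhe ih =>
      have h1 : insert e U \ F = U \ F := Finset.insert_sdiff_of_mem _ heF
      have h2 : insert e U ∩ F = insert e (U ∩ F) := Finset.insert_inter_of_mem heF
      have h3 : e ∉ U ∩ F := fun hh => henU (Finset.mem_inter.1 hh).1
      rw [h1, h2, bal_insert h3]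
      have hd : G.dlt e x = (if G.tail e = x then 1 else 0) - (if v = x then 1 else 0) := by
        rw [dlt, hhe]
      rw [hd]
      linarith [ih]

/-- flipping a flow along a residual set -/
lemma bal_flip (F U : Finset E) (x : V) :
    G.bal ((F \ U) ∪ (U \ F)) x = G.bal F x + (G.bal (U \ F) x - G.bal (U ∩ F) x) := by
  have hd : Disjoint (F \ U) (U \ F) := by
    refine Finset.disjoint_left.2 fun a ha hb => ?_
    exact (Finset.mem_sdiff.1 hb).2 (Finset.mem_sdiff.1 ha).1
  have hF : G.bal F x = G.bal (F \ U) x + G.bal (F ∩ U) x := by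
    unfold bal
    rw [← Finset.sdiff_inter_self_left F U]
    exact (Finset.sum_sdiff Finset.inter_subset_left).symm
  rw [bal, Finset.sum_union hd, ← bal, ← bal, hF, Finset.inter_comm]
  ring

lemma aug_endpoints {F : Finset E} {v : V} {U : Finset E} (h : Aug G s F v U) :
    ∀ e ∈ U, (∃ U', Aug G s F (G.tail e) U') ∧ (∃ U', Aug G s F (G.head e) U') := by
  induction h with
  | base => simp
  | @fwd v U e hprev henF henU het ih =>
      intro f hf
      rcases Finset.mem_insert.1 hf with rfl | hf
      · exact ⟨⟨U, het ▸ hprev⟩, ⟨insert f U, Aug.fwd hprev henF henU het⟩⟩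
      · exact ih f hf
  | @bwd v U e hprev heF henU hhe ih =>
      intro f hf
      rcases Finset.mem_insert.1 hf with rfl | hf
      · exact ⟨⟨insert f U, Aug.bwd hprev heF henU hhe⟩, ⟨U, hhe ▸ hprev⟩⟩
      · exact ih f hf

/-- a conserving edge set of value at least `d` exists, provided all cuts have
at least `d` edges -/
theorem exists_flow [Fintype V] (hts : t ≠ s) (d : ℕ)
    (hcut : ∀ S : Finset V, s ∈ S → t ∉ S → d ≤ (G.cutE S).card) :
    ∃ F : Finset E, Conserving G s t F ∧ (d : ℤ) ≤ G.bal F s := by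
  classical
  obtain ⟨F, hFmem, hFmax⟩ := Finset.exists_max_image
    ((Finset.univ : Finset (Finset E)).filter fun F => Conserving G s t F)
    (fun F => G.bal F s)
    ⟨∅, Finset.mem_filter.2 ⟨Finset.mem_univ _, fun x _ _ => by simp [bal]⟩⟩
  have hFcons : Conserving G s t F := (Finset.mem_filter.1 hFmem).2
  refine ⟨F, hFcons, ?_⟩
  set S : Finset V := Finset.univ.filter (fun v => ∃ U, Aug G s F v U) with hS
  have hsS : s ∈ S := Finset.mem_filter.2 ⟨Finset.mem_univ _, ⟨∅, Aug.base⟩⟩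
  have htS : t ∉ S := by
    intro ht
    obtain ⟨U, hU⟩ := (Finset.mem_filter.1 ht).2
    set F' := (F \ U) ∪ (U \ F) with hF'
    have hcons' : Conserving G s t F' := by
      intro x hxs hxt
      rw [hF', bal_flip, aug_abal hU, hFcons x hxs hxt]
      simp [Ne.symm hxs, Ne.symm hxt]
    have hval' : G.bal F' s = G.bal F s + 1 := by
      rw [hF', bal_flip, aug_abal hU]
      simp [hts]
    have := hFmax F' (Finset.mem_filter.2 ⟨Finset.mem_univ _, hcons'⟩)
    omega
  have hfwd : ∀ e : E, G.tail e ∈ S → e ∉ F → G.head e ∈ S := by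
    intro e htl henF
    obtain ⟨U, hU⟩ := (Finset.mem_filter.1 htl).2
    by_cases heU : e ∈ U
    · exact Finset.mem_filter.2 ⟨Finset.mem_univ _, (aug_endpoints hU e heU).2⟩
    · exact Finset.mem_filter.2 ⟨Finset.mem_univ _, ⟨_, Aug.fwd hU henF heU rfl⟩⟩
  have hbwd : ∀ e : E, G.head e ∈ S → e ∈ F → G.tail e ∈ S := by
    intro e hhd heF
    obtain ⟨U, hU⟩ := (Finset.mem_filter.1 hhd).2
    by_cases heU : e ∈ U
    · exact Finset.mem_filter.2 ⟨Finset.mem_univ _, (aug_endpoints hU e heU).1⟩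
    · exact Finset.mem_filter.2 ⟨Finset.mem_univ _, ⟨_, Aug.bwd hU heF heU rfl⟩⟩
  have hsum : G.bal F s = ∑ v ∈ S, G.bal F v := by
    rw [Finset.sum_eq_single_of_mem s hsS]
    intro v hvS hvs
    exact hFcons v hvs (fun h => htS (h ▸ hvS))
  have hswap : ∑ v ∈ S, G.bal F v =
      ∑ e ∈ F, ((if G.tail e ∈ S then (1:ℤ) else 0) - (if G.head e ∈ S then 1 else 0)) := by
    unfold bal
    rw [Finset.sum_comm]
    refine Finset.sum_congr rfl fun e _ => ?_
    unfold dlt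
    rw [Finset.sum_sub_distrib, Finset.sum_ite_eq, Finset.sum_ite_eq]
  have hcutsub : G.cutE S ⊆ F := by
    intro e he
    rw [cutE, Finset.mem_filter] at he
    by_contra henF
    exact he.2.2 (hfwd e he.2.1 henF)
  have hnonneg : ∀ e ∈ F,
      (0:ℤ) ≤ (if G.tail e ∈ S then (1:ℤ) else 0) - (if G.head e ∈ S then 1 else 0) := by
    intro e heF
    by_cases hh : G.head e ∈ S
    · simp [hh, hbwd e hh heF]
    · by_cases htl : G.tail e ∈ S <;> simp [hh, htl]
  have hone : ∀ e ∈ G.cutE S,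
      (if G.tail e ∈ S then (1:ℤ) else 0) - (if G.head e ∈ S then 1 else 0) = 1 := by
    intro e he
    rw [cutE, Finset.mem_filter] at he
    simp [he.2.1, he.2.2]
  calc (d:ℤ) ≤ ((G.cutE S).card : ℤ) := by exact_mod_cast hcut S hsS htS
    _ = ∑ e ∈ G.cutE S,
        ((if G.tail e ∈ S then (1:ℤ) else 0) - (if G.head e ∈ S then 1 else 0)) := by
        rw [Finset.sum_congr rfl hone]; simp
    _ ≤ ∑ e ∈ F, ((if G.tail e ∈ S then (1:ℤ) else 0) - (if G.head e ∈ S then 1 else 0)) :=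
        Finset.sum_le_sum_of_subset_of_nonneg hcutsub (fun e heF _ => hnonneg e heF)
    _ = G.bal F s := by rw [hsum, hswap]

/-- the signed count of a chain list at a vertex telescopes -/
lemma chain_count (x : V) (L : List E) (hne : L ≠ [])
    (hch : L.Chain' fun e f => G.head e = G.tail f) :
    ((L.countP fun e => G.tail e = x) : ℤ) - ((L.countP fun e => G.head e = x) : ℤ) =
    (if G.tail (L.head hne) = x then 1 else 0)
      - (if G.head (L.getLast hne) = x then 1 else 0) := by
  induction L with
  | nil => exact absurd rfl hne
  | cons e L ih =>
    cases L with
    | nil => simp [List.countP_cons]; split_ifs <;> simp [*]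
    | cons f L' =>
      unfold List.Chain' at hch
      rw [List.isChain_cons_cons] at hch
      have h1 := ih (by simp) hch.2
      have hhead : G.head e = G.tail f := hch.1
      rw [List.getLast_cons (by simp : (f :: L') ≠ [])]
      have h2 : (if G.head e = x then (1:ℤ) else 0) = (if G.tail f = x then 1 else 0) := by
        rw [hhead]
      simp only [List.countP_cons, decide_eq_true_eq, List.head_cons] at h1 ⊢
      push_cast at h1 ⊢
      split_ifs at h1 h2 ⊢ <;> simp_all <;> linarith

/-- counting edges of a nodup list inside `F` -/
lemma countP_le_card {F : Finset E} {L : List E} (hnd : L.Nodup) (hsub : ∀ e ∈ L, e ∈ F)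
    (p : E → Prop) [DecidablePred p] :
    L.countP (fun e => p e) ≤ (F.filter p).card := by
  rw [List.countP_eq_length_filter, ← List.toFinset_card_of_nodup (hnd.filter _)]
  apply Finset.card_le_card
  intro a ha
  rw [List.mem_toFinset, List.mem_filter, decide_eq_true_eq] at ha
  exact Finset.mem_filter.2 ⟨hsub a ha.1, ha.2⟩

lemma countP_toFinset {L : List E} (hnd : L.Nodup) (p : E → Prop) [DecidablePred p] :
    ((L.toFinset.filter p).card : ℤ) = L.countP (fun e => p e) := by
  have h : L.toFinset.filter p = (L.filter (fun e => p e)).toFinset := by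
    ext a
    simp [List.mem_filter]
  rw [h, List.toFinset_card_of_nodup (hnd.filter _), List.countP_eq_length_filter]

/-- at a non-`t` endpoint of a partial walk inside a flow there is an unused outgoing
flow edge -/
lemma exists_next {F : Finset E} (hcons : Conserving G s t F) (hval : 1 ≤ G.bal F s)
    {v : V} (hvt : v ≠ t) (w : G.Walk s v) (hnd : w.edges.Nodup)
    (hsub : ∀ e ∈ w.edges, e ∈ F) :
    ∃ e ∈ F, G.tail e = v ∧ e ∉ w.edges := by
  have hcnt := chain_count (G := G) v w.edges w.ne w.chain
  rw [w.first, w.last, if_pos rfl] at hcnt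
  have hin_le : (w.edges.countP fun e => G.head e = v) ≤
      ((F.filter fun e => G.head e = v).card) := countP_le_card hnd hsub _
  have hbal := bal_eq_card (G := G) F v
  have hout : (w.edges.countP fun e => G.tail e = v) <
      ((F.filter fun e => G.tail e = v).card) := by
    by_cases hvs : v = s
    · subst hvs
      simp only [if_pos rfl] at hcnt
      omega
    · have h0 := hcons v hvs hvt
      have hz : (if s = v then (1:ℤ) else 0) = 0 := by simp [Ne.symm hvs]
      rw [hz] at hcnt
      omega
  by_contra hno
  push_neg at hno
  have hsupf : (F.filter fun e => G.tail e = v) ⊆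
      (w.edges.filter fun e => G.tail e = v).toFinset := by
    intro a ha
    rw [Finset.mem_filter] at ha
    rw [List.mem_toFinset, List.mem_filter, decide_eq_true_eq]
    exact ⟨hno a ha.1 ha.2, ha.2⟩
  have hcard := Finset.card_le_card hsupf
  rw [List.toFinset_card_of_nodup (hnd.filter _), ← List.countP_eq_length_filter] at hcard
  omega

lemma exists_first {F : Finset E} (hval : 1 ≤ G.bal F s) :
    ∃ e ∈ F, G.tail e = s := by
  have hbal := bal_eq_card (G := G) F s
  have hpos : 0 < (F.filter fun e => G.tail e = s).card := by omega
  obtain ⟨e, he⟩ := Finset.card_pos.1 hpos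
  exact ⟨e, (Finset.mem_filter.1 he).1, (Finset.mem_filter.1 he).2⟩

lemma walk_complete {F : Finset E} (hcons : Conserving G s t F) (hval : 1 ≤ G.bal F s) :
    ∀ (n : ℕ) (v : V) (w : G.Walk s v), w.edges.Nodup → (∀ e ∈ w.edges, e ∈ F) →
      F.card ≤ w.edges.length + n →
      ∃ w' : G.Walk s t, w'.edges.Nodup ∧ ∀ e ∈ w'.edges, e ∈ F := by
  intro n
  induction n with
  | zero =>
    intro v w hnd hsub hlen
    by_cases hvt : v = t
    · exact ⟨hvt ▸ w, by subst hvt; exact ⟨hnd, hsub⟩⟩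
    · obtain ⟨e, heF, het, hen⟩ := exists_next hcons hval hvt w hnd hsub
      exfalso
      have hnd' : (e :: w.edges).Nodup := List.nodup_cons.2 ⟨hen, hnd⟩
      have hle : (e :: w.edges).length ≤ F.card := by
        rw [← List.toFinset_card_of_nodup hnd']
        apply Finset.card_le_card
        intro a ha
        rw [List.mem_toFinset, List.mem_cons] at ha
        rcases ha with rfl | ha
        · exact heF
        · exact hsub a ha
      simp at hle
      omega
  | succ n ih =>
    intro v w hnd hsub hlen
    by_cases hvt : v = t
    · exact ⟨hvt ▸ w, by subst hvt; exact ⟨hnd, hsub⟩⟩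
    · obtain ⟨e, heF, het, hen⟩ := exists_next hcons hval hvt w hnd hsub
      refine ih (G.head e) (w.snoc e het) ?_ ?_ ?_
      · simpa [Walk.snoc, List.nodup_append] using ⟨hnd, fun a ha h => hen (h ▸ ha)⟩
      · intro f hf
        rcases List.mem_append.1 hf with hf | hf
        · exact hsub f hf
        · simp at hf; subst hf; exact heF
      · simp only [Walk.snoc, List.length_append, List.length_singleton]
        omega

lemma extract_walk {F : Finset E} (hcons : Conserving G s t F) (hval : 1 ≤ G.bal F s) :
    ∃ w : G.Walk s t, w.edges.Nodup ∧ ∀ e ∈ w.edges, e ∈ F := by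
  obtain ⟨e, heF, het⟩ := exists_first (G := G) hval
  refine walk_complete hcons hval F.card (G.head e) (Walk.single e het rfl)
    (by simp [Walk.single]) ?_ (by simp)
  intro f hf
  simp only [Walk.single, List.mem_singleton] at hf
  subst hf
  exact heF

/-- flow decomposition -/
lemma decomp (hts : t ≠ s) :
    ∀ (m : ℕ) (F : Finset E), Conserving G s t F → (m : ℤ) ≤ G.bal F s →
      ∃ P : Fin m → G.Walk s t, (∀ i, (P i).edges.Nodup) ∧
        (∀ i, ∀ e ∈ (P i).edges, e ∈ F) ∧
        (∀ i j, i ≠ j → ∀ e ∈ (P i).edges, e ∉ (P j).edges) := by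
  intro m
  induction m with
  | zero =>
    intro F _ _
    exact ⟨fun i => i.elim0, fun i => i.elim0, fun i => i.elim0, fun i => i.elim0⟩
  | succ m ih =>
    intro F hcons hval
    obtain ⟨w, hwnd, hwsub⟩ := extract_walk hcons (by push_cast at hval ⊢; omega)
    set F' := F \ w.edges.toFinset with hF'
    have hbalsub : ∀ x : V, G.bal F' x = G.bal F x - G.bal w.edges.toFinset x := by
      intro x
      unfold bal
      rw [eq_sub_iff_add_eq,
        Finset.sum_sdiff (by intro a ha; exact hwsub a (List.mem_toFinset.1 ha))]
    have hwbal : ∀ x : V, G.bal w.edges.toFinset x =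
        (if s = x then 1 else 0) - (if t = x then 1 else 0) := by
      intro x
      have hcnt := chain_count (G := G) x w.edges w.ne w.chain
      rw [w.first, w.last] at hcnt
      rw [bal_eq_card, countP_toFinset hwnd, countP_toFinset hwnd, hcnt]
    have hcons' : Conserving G s t F' := by
      intro x hxs hxt
      rw [hbalsub, hwbal, hcons x hxs hxt]
      simp [Ne.symm hxs, Ne.symm hxt]
    have hval' : (m : ℤ) ≤ G.bal F' s := by
      rw [hbalsub, hwbal, if_pos rfl, if_neg hts]
      push_cast at hval
      linarith
    obtain ⟨P', hnd', hsub', hdisj'⟩ := ih F' hcons' hval'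
    refine ⟨Fin.cons w P', ?_, ?_, ?_⟩
    · intro i
      refine Fin.cases ?_ ?_ i <;> simp [hwnd, hnd']
    · intro i
      refine Fin.cases ?_ ?_ i
      · simpa using hwsub
      · intro j f hf
        exact Finset.mem_sdiff.1 (hsub' j f hf) |>.1
    · intro i j hij e he hmem
      rcases Fin.eq_zero_or_eq_succ i with rfl | ⟨i', rfl⟩ <;>
        rcases Fin.eq_zero_or_eq_succ j with rfl | ⟨j', rfl⟩
      · exact absurd rfl hij
      · simp only [Fin.cons_zero, Fin.cons_succ] at he hmem
        exact (Finset.mem_sdiff.1 (hsub' j' e hmem)).2 (List.mem_toFinset.2 he)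
      · simp only [Fin.cons_zero, Fin.cons_succ] at he hmem
        exact (Finset.mem_sdiff.1 (hsub' i' e he)).2 (List.mem_toFinset.2 hmem)
      · simp only [Fin.cons_succ] at he hmem
        exact hdisj' i' j' (fun h => hij (congrArg Fin.succ h)) e he hmem

end Flow

section Broadcast

variable [DecidableEq V] {G : Multigraph V E} {s t : V}

lemma btail_inl (e : E) : (G.broadcast s).tail (Sum.inl e) =
    if h : G.tail e = s then Sum.inl s else Sum.inr ⟨G.tail e, h⟩ := rfl

lemma bhead_inl (e : E) : (G.broadcast s).head (Sum.inl e) = Sum.inl (G.head e) := rfl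

lemma btail_inr (u : {u : V // u ≠ s}) :
    (G.broadcast s).tail (Sum.inr u) = Sum.inl u.1 := rfl

lemma bhead_inr (u : {u : V // u ≠ s}) :
    (G.broadcast s).head (Sum.inr u) = Sum.inr u := rfl

lemma step_inl_inl {e f : E}
    (h : (G.broadcast s).head (Sum.inl e) = (G.broadcast s).tail (Sum.inl f)) :
    G.head e = s ∧ G.tail f = s := by
  rw [bhead_inl, btail_inl] at h
  split_ifs at h with hf
  exact ⟨Sum.inl.inj h, hf⟩

lemma step_inl_inr {e : E} {u : {u : V // u ≠ s}}
    (h : (G.broadcast s).head (Sum.inl e) = (G.broadcast s).tail (Sum.inr u)) :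
    G.head e = u.1 := by
  rw [bhead_inl, btail_inr] at h
  exact Sum.inl.inj h

lemma step_inr_inl {u : {u : V // u ≠ s}} {f : E}
    (h : (G.broadcast s).head (Sum.inr u) = (G.broadcast s).tail (Sum.inl f)) :
    G.tail f = u.1 := by
  rw [bhead_inr, btail_inl] at h
  split_ifs at h with hf
  rw [Sum.inr.inj h]

lemma step_inr_inr {u u' : {u : V // u ≠ s}}
    (h : (G.broadcast s).head (Sum.inr u) = (G.broadcast s).tail (Sum.inr u')) :
    False := by
  rw [bhead_inr, btail_inr] at h
  simp at h

/-- the projection of broadcast-edges to original edges -/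
def pj (s : V) (L : List (E ⊕ {u : V // u ≠ s})) : List E :=
  L.filterMap (Sum.elim some fun _ => none)

@[simp] lemma pj_nil : pj (E := E) s [] = [] := rfl

@[simp] lemma pj_cons_inl (e : E) (L : List (E ⊕ {u : V // u ≠ s})) :
    pj s (Sum.inl e :: L) = e :: pj s L := by
  simp [pj, List.filterMap_cons]

@[simp] lemma pj_cons_inr (u : {u : V // u ≠ s}) (L : List (E ⊕ {u : V // u ≠ s})) :
    pj s (Sum.inr u :: L) = pj s L := by
  simp [pj, List.filterMap_cons]

lemma mem_pj {L : List (E ⊕ {u : V // u ≠ s})} {e : E} :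
    e ∈ pj s L ↔ Sum.inl e ∈ L := by
  rw [pj, List.mem_filterMap]
  constructor
  · rintro ⟨x, hx, hex⟩
    cases x with
    | inl e' => simp only [Sum.elim_inl, Option.some.injEq] at hex; subst hex; exact hx
    | inr u => simp at hex
  · intro h
    exact ⟨Sum.inl e, h, rfl⟩

lemma pj_nodup {L : List (E ⊕ {u : V // u ≠ s})} (h : L.Nodup) : (pj s L).Nodup := by
  refine h.filterMap ?_
  intro a a' b hb hb'
  cases a <;> cases a' <;> simp_all

lemma proj_chain (L : List (E ⊕ {u : V // u ≠ s}))
    (hch : L.Chain' fun x y => (G.broadcast s).head x = (G.broadcast s).tail y) :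
    (pj s L).Chain' (fun e f => G.head e = G.tail f) ∧
    (∀ x f, L.head? = some x → (pj s L).head? = some f →
      (∀ e, x = Sum.inl e → e = f) ∧ (∀ u, x = Sum.inr u → G.tail f = u.1)) := by
  induction L with
  | nil => exact ⟨List.isChain_nil, by simp⟩
  | cons x L ih =>
    unfold List.Chain' at hch
    rw [List.isChain_cons] at hch
    obtain ⟨hrel, hchL⟩ := hch
    obtain ⟨ihc, ihh⟩ := ih hchL
    have hnext : ∀ f, (pj s L).head? = some f →
        ∃ y, L.head? = some y ∧ (G.broadcast s).head x = (G.broadcast s).tail y := by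
      intro f hf
      cases L with
      | nil => simp at hf
      | cons y L' => exact ⟨y, rfl, hrel y rfl⟩
    cases x with
    | inl e =>
      rw [pj_cons_inl]
      constructor
      · unfold List.Chain'
        rw [List.isChain_cons]
        refine ⟨?_, ihc⟩
        intro f hf
        obtain ⟨y, hy, hstep⟩ := hnext f hf
        have hok := ihh y f hy hf
        cases y with
        | inl g =>
          have hgf := hok.1 g rfl
          obtain ⟨h1, h2⟩ := step_inl_inl hstep
          rw [h1, ← hgf, h2]
        | inr u =>
          rw [step_inl_inr hstep, hok.2 u rfl]
      · intro x f hx hf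
        simp only [List.head?_cons, Option.some.injEq] at hx hf
        subst hx
        subst hf
        exact ⟨fun e' he' => (Sum.inl.inj he').symm, fun u hu => by simp at hu⟩
    | inr u =>
      rw [pj_cons_inr]
      refine ⟨ihc, ?_⟩
      intro x f hx hf
      simp only [List.head?_cons, Option.some.injEq] at hx
      subst hx
      refine ⟨fun e' he' => by simp at he', fun u' hu' => ?_⟩
      obtain rfl : u = u' := Sum.inr.inj hu'
      obtain ⟨y, hy, hstep⟩ := hnext f hf
      have hok := ihh y f hy hf
      cases y with
      | inl g =>
        rw [← hok.1 g rfl]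
        exact step_inr_inl hstep
      | inr u'' => exact absurd hstep step_inr_inr

lemma proj_last (L : List (E ⊕ {u : V // u ≠ s})) (h : L ≠ []) (g : E)
    (hg : L.getLast h = Sum.inl g) : ∃ hp : pj s L ≠ [], (pj s L).getLast hp = g := by
  induction L with
  | nil => exact absurd rfl h
  | cons x L ih =>
    cases L with
    | nil =>
      simp only [List.getLast_singleton] at hg
      subst hg
      exact ⟨by simp, by simp⟩
    | cons y L' =>
      rw [List.getLast_cons (by simp : (y :: L') ≠ [])] at hg
      obtain ⟨hp, hlast⟩ := ih (by simp) hg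
      cases x with
      | inl e =>
        rw [pj_cons_inl]
        refine ⟨by simp, ?_⟩
        rw [List.getLast_cons hp]
        exact hlast
      | inr u =>
        rw [pj_cons_inr]
        exact ⟨hp, hlast⟩

lemma walk_first_edge (hw : (G.broadcast s).Walk (Sum.inl s) (Sum.inl t)) :
    ∃ e : E, hw.edges.head hw.ne = Sum.inl e ∧ G.tail e = s := by
  cases hx : hw.edges.head hw.ne with
  | inl e =>
    have h1 := hw.first
    rw [hx, btail_inl] at h1
    split_ifs at h1 with h
    exact ⟨e, rfl, h⟩
  | inr u =>
    have h1 := hw.first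
    rw [hx, btail_inr] at h1
    exact absurd (Sum.inl.inj h1) u.2

lemma walk_last_edge (hw : (G.broadcast s).Walk (Sum.inl s) (Sum.inl t)) :
    ∃ g : E, hw.edges.getLast hw.ne = Sum.inl g ∧ G.head g = t := by
  cases hx : hw.edges.getLast hw.ne with
  | inl g =>
    have h1 := hw.last
    rw [hx, bhead_inl] at h1
    exact ⟨g, rfl, Sum.inl.inj h1⟩
  | inr u =>
    have h1 := hw.last
    rw [hx, bhead_inr] at h1
    exact absurd h1 (by simp)

/-- the projection of a broadcast walk -/
def projWalk (hw : (G.broadcast s).Walk (Sum.inl s) (Sum.inl t)) : G.Walk s t where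
  edges := pj s hw.edges
  ne := by
    obtain ⟨e, hx, -⟩ := walk_first_edge hw
    exact List.ne_nil_of_mem (mem_pj.2 (hx ▸ List.head_mem hw.ne))
  first := by
    obtain ⟨e, hx, hes⟩ := walk_first_edge hw
    have hne : pj s hw.edges ≠ [] :=
      List.ne_nil_of_mem (mem_pj.2 (hx ▸ List.head_mem hw.ne))
    have hh : (pj s hw.edges).head? = some ((pj s hw.edges).head hne) :=
      List.head?_eq_head hne
    have h1 : hw.edges.head? = some (Sum.inl e) := by
      rw [List.head?_eq_head hw.ne, hx]
    have h2 := ((proj_chain hw.edges hw.chain).2 _ _ h1 hh).1 e rfl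
    rw [← h2, hes]
  last := by
    obtain ⟨g, hx, hgt⟩ := walk_last_edge hw
    obtain ⟨hp, hlast⟩ := proj_last hw.edges hw.ne g hx
    rw [hlast]
    exact hgt
  chain := (proj_chain hw.edges hw.chain).1

lemma projWalk_edges (hw : (G.broadcast s).Walk (Sum.inl s) (Sum.inl t)) :
    (projWalk hw).edges = pj s hw.edges := rfl

/-- internal vertices of the projected walk give `inr` edges of the broadcast walk -/
lemma proj_internal (hw : (G.broadcast s).Walk (Sum.inl s) (Sum.inl t))
    (hnd : hw.edges.Nodup) {v : V} (hv : v ∈ (projWalk hw).internals) (hvs : v ≠ s) :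
    Sum.inr (⟨v, hvs⟩ : {u : V // u ≠ s}) ∈ hw.edges := by
  obtain ⟨e, he, hev⟩ := hv
  rw [projWalk_edges] at he
  have hpnd : (pj s hw.edges).Nodup := pj_nodup hnd
  obtain ⟨g, hgL, hgt⟩ := walk_last_edge hw
  obtain ⟨hp, hlast⟩ := proj_last hw.edges hw.ne g hgL
  have hpe : e ∈ pj s hw.edges := List.dropLast_subset _ he
  have hne_last : e ≠ g := by
    rintro rfl
    have hsplit : pj s hw.edges = (pj s hw.edges).dropLast ++ [e] := by
      conv_lhs => rw [← List.dropLast_append_getLast hp]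
      rw [hlast]
    rw [hsplit] at hpnd
    obtain ⟨-, -, hdisj⟩ := List.nodup_append.1 hpnd
    exact hdisj _ he _ (List.mem_singleton.2 rfl) rfl
  obtain ⟨A, B, hAB⟩ := List.append_of_mem (mem_pj.1 hpe)
  have hBne : B ≠ [] := by
    rintro rfl
    have hlastL : hw.edges.getLast hw.ne = Sum.inl e := by
      have h5 : hw.edges.getLast? = some (Sum.inl e) := by
        rw [hAB, List.getLast?_concat]
      rw [List.getLast?_eq_getLast_of_ne_nil hw.ne] at h5
      exact Option.some.inj h5
    rw [hlastL] at hgL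
    exact hne_last (Sum.inl.inj hgL)
  obtain ⟨b, B', rfl⟩ := List.exists_cons_of_ne_nil hBne
  have hstep : (G.broadcast s).head (Sum.inl e) = (G.broadcast s).tail b := by
    have hch := hw.chain
    rw [hAB] at hch
    exact (List.isChain_append_cons_cons.1 hch).2.1
  cases b with
  | inl f =>
    obtain ⟨h1, -⟩ := step_inl_inl hstep
    exact absurd (hev ▸ h1 : v = s) hvs
  | inr u =>
    have hu : u = ⟨v, hvs⟩ := Subtype.ext (by rw [← step_inl_inr hstep, hev])
    rw [hAB, ← hu]
    simp

end Broadcast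

section CutBound

variable [Fintype V] [Fintype E] [DecidableEq V] {G : Multigraph V E} {s t : V}

lemma broadcast_cut (hacyc : G.Acyclic) {d : ℕ}
    (hdiv : ∀ v : V, v ≠ s → d ≤ G.diversity s v) :
    ∀ S : Finset (V ⊕ {u : V // u ≠ s}), Sum.inl s ∈ S → Sum.inl t ∉ S →
      d ≤ ((G.broadcast s).cutE S).card := by
  classical
  intro S hsS htS
  obtain ⟨v, hvX, hvmin⟩ := (wf_transGen hacyc).has_min {v : V | Sum.inl v ∉ S} ⟨t, htS⟩
  have hvs : v ≠ s := fun h => hvX (by rw [h] at hvX ⊢; exact hsS)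
  have hpar : ∀ u : V, G.rel u v → Sum.inl u ∈ S := by
    intro u hr
    by_contra h
    exact hvmin u h (Relation.TransGen.single hr)
  set P : Finset V :=
    Finset.univ.filter (fun u => u ≠ s ∧ ∃ e : E, G.tail e = u ∧ G.head e = v) with hP
  set Q : Finset E := Finset.univ.filter (fun e : E => G.tail e = s ∧ G.head e = v) with hQ
  have hd : d ≤ P.card + Q.card := hdiv v hvs
  set W' : Finset V :=
    Finset.univ.filter (fun u => ∃ h : u ≠ s, Sum.inr ⟨u, h⟩ ∈ S) with hW
  set D1 : Finset (E ⊕ {u : V // u ≠ s}) :=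
    (P \ W').attach.image
      (fun u => Sum.inr ⟨u.1, (Finset.mem_filter.1 (Finset.mem_sdiff.1 u.2).1).2.1⟩) with hD1
  set E2 : Finset E :=
    Finset.univ.filter (fun e : E => (G.tail e = s ∨ G.tail e ∈ W') ∧ G.head e = v) with hE2
  set D2 : Finset (E ⊕ {u : V // u ≠ s}) := E2.image Sum.inl with hD2
  have hD1sub : D1 ⊆ (G.broadcast s).cutE S := by
    intro x hx
    obtain ⟨u, -, rfl⟩ := Finset.mem_image.1 hx
    have huP : u.1 ∈ P := (Finset.mem_sdiff.1 u.2).1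
    have huW : u.1 ∉ W' := (Finset.mem_sdiff.1 u.2).2
    obtain ⟨hus, e, hte, hhe⟩ := (Finset.mem_filter.1 huP).2
    refine Finset.mem_filter.2 ⟨Finset.mem_univ _, ?_, ?_⟩
    · rw [btail_inr]
      exact hpar u.1 ⟨e, hte, hhe⟩
    · rw [bhead_inr]
      intro hin
      exact huW (Finset.mem_filter.2 ⟨Finset.mem_univ _, ⟨_, hin⟩⟩)
  have hD2sub : D2 ⊆ (G.broadcast s).cutE S := by
    intro x hx
    obtain ⟨e, he, rfl⟩ := Finset.mem_image.1 hx
    obtain ⟨hdisj, hhe⟩ := (Finset.mem_filter.1 he).2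
    refine Finset.mem_filter.2 ⟨Finset.mem_univ _, ?_, ?_⟩
    · rw [btail_inl]
      split_ifs with hes
      · exact hsS
      · rcases hdisj with h | h
        · exact absurd h hes
        · obtain ⟨h', hin⟩ := (Finset.mem_filter.1 h).2
          exact hin
    · rw [bhead_inl, hhe]
      exact hvX
  have hdisjD : Disjoint D1 D2 := by
    refine Finset.disjoint_left.2 fun a ha hb => ?_
    obtain ⟨u, -, rfl⟩ := Finset.mem_image.1 ha
    obtain ⟨e, -, he⟩ := Finset.mem_image.1 hb
    exact absurd he (by simp)
  have hcard1 : D1.card = (P \ W').card := by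
    rw [hD1, Finset.card_image_of_injOn, Finset.card_attach]
    intro a _ b _ hab
    have h5 := Sum.inr.inj hab
    injection h5 with h6
    exact Subtype.ext h6
  have hcard2 : D2.card = E2.card := Finset.card_image_of_injective _ Sum.inl_injective
  set E2a : Finset E :=
    Finset.univ.filter (fun e : E => G.tail e ∈ W' ∧ G.head e = v) with hE2a
  have hsub2 : E2a ∪ Q ⊆ E2 := by
    intro e he
    rcases Finset.mem_union.1 he with h | h
    · obtain ⟨h1, h2⟩ := (Finset.mem_filter.1 h).2
      exact Finset.mem_filter.2 ⟨Finset.mem_univ _, Or.inr h1, h2⟩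
    · obtain ⟨h1, h2⟩ := (Finset.mem_filter.1 h).2
      exact Finset.mem_filter.2 ⟨Finset.mem_univ _, Or.inl h1, h2⟩
  have hdisj2 : Disjoint E2a Q := by
    refine Finset.disjoint_left.2 fun e he hq => ?_
    obtain ⟨h1, -⟩ := (Finset.mem_filter.1 he).2
    obtain ⟨h2, -⟩ := (Finset.mem_filter.1 hq).2
    obtain ⟨hne, -⟩ := (Finset.mem_filter.1 h1).2
    exact hne h2
  have hsurj : (P ∩ W').card ≤ E2a.card := by
    apply Finset.card_le_card_of_surjOn G.tail
    intro u hu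
    rw [Finset.coe_inter, Set.mem_inter_iff] at hu
    obtain ⟨huP, huW⟩ := hu
    obtain ⟨-, e, hte, hhe⟩ := (Finset.mem_filter.1 huP).2
    refine ⟨e, ?_, hte⟩
    rw [Finset.mem_coe, hE2a, Finset.mem_filter]
    exact ⟨Finset.mem_univ _, by rw [hte]; exact huW, hhe⟩
  have hQle : (P ∩ W').card + Q.card ≤ E2.card := by
    calc (P ∩ W').card + Q.card ≤ E2a.card + Q.card := by omega
      _ = (E2a ∪ Q).card := (Finset.card_union_of_disjoint hdisj2).symm
      _ ≤ E2.card := Finset.card_le_card hsub2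
  have hPsplit : (P \ W').card + (P ∩ W').card = P.card := Finset.card_sdiff_add_card_inter _ _
  calc d ≤ P.card + Q.card := hd
    _ = (P \ W').card + ((P ∩ W').card + Q.card) := by omega
    _ ≤ D1.card + D2.card := by omega
    _ = (D1 ∪ D2).card := (Finset.card_union_of_disjoint hdisjD).symm
    _ ≤ ((G.broadcast s).cutE S).card :=
        Finset.card_le_card (Finset.union_subset hD1sub hD2sub)

end CutBound

end Multigraph

/-- In an acyclic multigraph in which every non-source vertex has
diversity at least `d`, every vertex `t ≠ s` nonadjacent to `s` admits at
least `d` pairwise internally-disjoint paths from `s`. -/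
theorem stmt3 {V E : Type} [Fintype V] [Fintype E] [DecidableEq V]
    (G : Multigraph V E) (s : V) (hacyc : G.Acyclic) (d : ℕ)
    (hdiv : ∀ v : V, v ≠ s → d ≤ G.diversity s v)
    (t : V) (hts : t ≠ s) (hna : G.Nonadjacent s t) :
    G.HasIntDisjoint s t d := by
  classical
  haveI : DecidableEq E := Classical.decEq E
  have hts' : Sum.inl t ≠ (Sum.inl s : V ⊕ {u : V // u ≠ s}) :=
    fun h => hts (Sum.inl.inj h)
  obtain ⟨F, hFcons, hFval⟩ := Multigraph.exists_flow (G := G.broadcast s) hts' d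
    (Multigraph.broadcast_cut hacyc hdiv)
  obtain ⟨P, hnd, hsub, hdisj⟩ := Multigraph.decomp (G := G.broadcast s) hts' d F hFcons hFval
  refine ⟨fun i => Multigraph.projWalk (P i), ?_⟩
  intro i j hij
  constructor
  · apply Set.eq_empty_iff_forall_notMem.2
    rintro v ⟨hvi, hvj⟩
    have hvs : v ≠ s := by
      intro hv0
      obtain ⟨e, he, hev⟩ := hvi
      have hW := Multigraph.internal_walk (Multigraph.projWalk (P i)) he
      rw [hev, hv0] at hW
      exact (hacyc s).false hW.some
    exact hdisj i j hij _ (Multigraph.proj_internal (P i) (hnd i) hvi hvs)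
      (Multigraph.proj_internal (P j) (hnd j) hvj hvs)
  · apply Set.eq_empty_iff_forall_notMem.2
    rintro e ⟨hei, hej⟩
    exact hdisj i j hij _ (Multigraph.mem_pj.1 hei) (Multigraph.mem_pj.1 hej)
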